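/- Let p ≥ 2 and f ≥ 1 be integers. For a tuple t = (t_0, ..., t_{f−1}) of integers, indices read modulo f, and for s ∈ ℤ/fℤ define α_s(t) = (p^f − 1)^{−1} · Σ_{j=1}^{f} p^{f−j} t_{(j+s) mod f} ∈ ℚ. Then for any two tuples t, t' ∈ ℤ^f the following are equivalent: (a) α_s(t) − α_s(t') ∈ ℤ for some s; (b) α_s(t) − α_s(t') ∈ ℤ for every s; (c) Σ_{s=0}^{f−1} p^{f−1−s} (t_s − t'_s) ≡ 0 (mod p^f − 1). Moreover, for every t and every s one has α_s(t) + t_s = p·α_{s−1}(t). -/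

import Mathlib

/-- `α_s(t) = (p^f − 1)⁻¹ · Σ_{j=1}^{f} p^{f−j} t_{(j+s) mod f}` as a rational number. -/
noncomputable def alphaQ (p f : ℕ) (t : ZMod f → ℤ) (s : ZMod f) : ℚ :=
  ((p : ℚ) ^ f - 1)⁻¹ * ∑ j ∈ Finset.Icc 1 f, (p : ℚ) ^ (f - j) * (t (s + (j : ZMod f)) : ℚ)

/-- Integer numerator of `alphaQ`. -/
def Asum (p f : ℕ) (u : ZMod f → ℤ) (s : ZMod f) : ℤ :=
  ∑ j ∈ Finset.Icc 1 f, (p : ℤ) ^ (f - j) * u (s + (j : ZMod f))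

lemma alphaQ_eq (p f : ℕ) (u : ZMod f → ℤ) (s : ZMod f) :
    alphaQ p f u s = ((p : ℚ) ^ f - 1)⁻¹ * (Asum p f u s : ℚ) := by
  unfold alphaQ Asum
  push_cast
  ring

lemma pfq_ne (p : ℕ) {f : ℕ} (hp : 2 ≤ p) (hf : 1 ≤ f) : ((p : ℚ) ^ f - 1) ≠ 0 := by
  have h2 : (2 : ℚ) ≤ (p : ℚ) := by exact_mod_cast hp
  have h1 : (1 : ℚ) < (p : ℚ) := by linarith
  have := one_lt_pow₀ h1 (by omega : f ≠ 0)
  linarith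

lemma dvd_iff_exists (p : ℕ) {f : ℕ} (hp : 2 ≤ p) (hf : 1 ≤ f) (a : ℤ) :
    (∃ n : ℤ, ((p : ℚ) ^ f - 1)⁻¹ * (a : ℚ) = n) ↔ ((p : ℤ) ^ f - 1) ∣ a := by
  have hq := pfq_ne p hp hf
  constructor
  · rintro ⟨n, hn⟩
    refine ⟨n, ?_⟩
    have h1 : (a : ℚ) = ((p : ℚ) ^ f - 1) * n := by
      field_simp at hn
      linarith [hn]
    have h2 : (a : ℚ) = ((((p : ℤ) ^ f - 1) * n : ℤ) : ℚ) := by push_cast; linarith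
    exact_mod_cast h2
  · rintro ⟨k, rfl⟩
    refine ⟨k, ?_⟩
    push_cast
    field_simp

lemma Asum_rec (p : ℕ) {f : ℕ} (hf : 1 ≤ f) (u : ZMod f → ℤ) (s : ZMod f) :
    Asum p f u s + ((p : ℤ) ^ f - 1) * u s = (p : ℤ) * Asum p f u (s - 1) := by
  obtain ⟨m, rfl⟩ : ∃ m, f = m + 1 := ⟨f - 1, by omega⟩
  unfold Asum
  simp only [← Finset.Ico_add_one_right_eq_Icc, Finset.sum_Ico_eq_sum_range, Nat.succ_sub_one, Nat.add_sub_cancel]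

  rw [Finset.mul_sum, Finset.sum_range_succ, Finset.sum_range_succ']
  have h1 : ∀ i ∈ Finset.range m,
      (p : ℤ) ^ (m + 1 - (1 + i)) * u (s + ((1 + i : ℕ) : ZMod (m + 1)))
        = (p : ℤ) * ((p : ℤ) ^ (m + 1 - (1 + (i + 1))) *
            u (s - 1 + ((1 + (i + 1) : ℕ) : ZMod (m + 1)))) := by
    intro i hi
    rw [Finset.mem_range] at hi
    have hc : ((1 + (i + 1) : ℕ) : ZMod (m + 1)) = 1 + (((1 + i : ℕ)) : ZMod (m + 1)) := by
      push_cast; ring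
    rw [hc]
    have hc2 : s - 1 + (1 + ((1 + i : ℕ) : ZMod (m + 1))) = s + ((1 + i : ℕ) : ZMod (m + 1)) := by
      ring
    rw [hc2, ← mul_assoc]
    congr 1
    rw [← pow_succ']
    congr 1
    omega
  rw [Finset.sum_congr rfl h1, ← Finset.mul_sum]
  have hlast : (p : ℤ) ^ (m + 1 - (1 + m)) * u (s + ((1 + m : ℕ) : ZMod (m + 1))) = u s := by
    have h0 : ((1 + m : ℕ) : ZMod (m + 1)) = 0 := by
      rw [Nat.add_comm 1 m]; exact ZMod.natCast_self (m + 1)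
    have he : m + 1 - (1 + m) = 0 := by omega
    rw [h0, he, add_zero, pow_zero, one_mul]
  have hfirst : (p : ℤ) * ((p : ℤ) ^ (m + 1 - (1 + 0)) *
      u (s - 1 + ((1 + 0 : ℕ) : ZMod (m + 1)))) = (p : ℤ) ^ (m + 1) * u s := by
    have h0 : ((1 + 0 : ℕ) : ZMod (m + 1)) = 1 := by norm_num
    have he : m + 1 - (1 + 0) = m := by omega
    rw [h0, he]
    have h1 : s - 1 + 1 = s := by ring
    rw [h1, ← mul_assoc, ← pow_succ']
  rw [hlast, hfirst]
  ring

lemma dvd_step (p : ℕ) {f : ℕ} (hp : 2 ≤ p) (hf : 1 ≤ f) (t t' : ZMod f → ℤ) (s : ZMod f) :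
    (((p : ℤ) ^ f - 1) ∣ (Asum p f t s - Asum p f t' s)) ↔
    (((p : ℤ) ^ f - 1) ∣ (Asum p f t (s - 1) - Asum p f t' (s - 1))) := by
  have h1 := Asum_rec p hf t s
  have h2 := Asum_rec p hf t' s
  have key : Asum p f t s - Asum p f t' s + ((p : ℤ) ^ f - 1) * (t s - t' s)
      = (p : ℤ) * (Asum p f t (s - 1) - Asum p f t' (s - 1)) := by
    linear_combination h1 - h2
  have hcop : IsCoprime ((p : ℤ) ^ f - 1) (p : ℤ) := by
    obtain ⟨m, rfl⟩ : ∃ m, f = m + 1 := ⟨f - 1, by omega⟩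
    exact ⟨-1, (p : ℤ) ^ m, by ring⟩
  constructor
  · intro h
    have hd : ((p : ℤ) ^ f - 1) ∣ (p : ℤ) * (Asum p f t (s - 1) - Asum p f t' (s - 1)) := by
      rw [← key]; exact dvd_add h ⟨t s - t' s, rfl⟩
    exact hcop.dvd_of_dvd_mul_left hd
  · intro h
    have heq : Asum p f t s - Asum p f t' s
        = (p : ℤ) * (Asum p f t (s - 1) - Asum p f t' (s - 1))
          - ((p : ℤ) ^ f - 1) * (t s - t' s) := by linear_combination key
    rw [heq]
    exact dvd_sub (h.mul_left _) ⟨t s - t' s, rfl⟩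

lemma dvd_all (p : ℕ) {f : ℕ} (hp : 2 ≤ p) (hf : 1 ≤ f) (t t' : ZMod f → ℤ)
    (s0 : ZMod f) (h : ((p : ℤ) ^ f - 1) ∣ (Asum p f t s0 - Asum p f t' s0)) :
    ∀ s, ((p : ℤ) ^ f - 1) ∣ (Asum p f t s - Asum p f t' s) := by
  have hk : ∀ k : ℕ, ((p : ℤ) ^ f - 1) ∣ (Asum p f t (s0 - k) - Asum p f t' (s0 - k)) := by
    intro k
    induction k with
    | zero => simpa using h
    | succ n ih =>
      have hstep := (dvd_step p hp hf t t' (s0 - n)).mp ih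
      have hcast : s0 - (((n + 1 : ℕ)) : ZMod f) = s0 - (n : ZMod f) - 1 := by push_cast; ring
      rw [hcast]
      exact hstep
  intro s
  have : NeZero f := ⟨by omega⟩
  have hs : s0 - (((s0 - s).val : ℕ) : ZMod f) = s := by
    rw [ZMod.natCast_val, ZMod.cast_id]; ring
  rw [← hs]
  exact hk _

lemma Asum_neg_one (p : ℕ) {f : ℕ} (hf : 1 ≤ f) (u : ZMod f → ℤ) :
    Asum p f u (-1) = ∑ s ∈ Finset.range f, (p : ℤ) ^ (f - 1 - s) * u (s : ZMod f) := by
  unfold Asum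
  simp only [← Finset.Ico_add_one_right_eq_Icc, Finset.sum_Ico_eq_sum_range, Nat.succ_sub_one]

  refine Finset.sum_congr rfl fun i _ => ?_
  have h1 : f - (1 + i) = f - 1 - i := by omega
  have h2 : (-1 : ZMod f) + ((1 + i : ℕ) : ZMod f) = (i : ZMod f) := by push_cast; ring
  rw [h1, h2]

/-- arithmetic content of Lemma `comparerank1` of the paper.
For tuples `t, t' : ℤ/fℤ → ℤ`, the conditions (a) `α_s(t) − α_s(t') ∈ ℤ` for some `s`,
(b) the same for every `s`, and (c) `p^f − 1 ∣ Σ p^{f−1−s}(t_s − t'_s)` are equivalent;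
moreover `α_s(t) + t_s = p · α_{s−1}(t)` always. -/
theorem stmt8 {p f : ℕ} (hp : 2 ≤ p) (hf : 1 ≤ f) (t t' : ZMod f → ℤ) :
    (((∃ s : ZMod f, ∃ n : ℤ, alphaQ p f t s - alphaQ p f t' s = n) ↔
      (∀ s : ZMod f, ∃ n : ℤ, alphaQ p f t s - alphaQ p f t' s = n)) ∧
     ((∀ s : ZMod f, ∃ n : ℤ, alphaQ p f t s - alphaQ p f t' s = n) ↔
      ((p : ℤ) ^ f - 1 ∣
        ∑ s ∈ Finset.range f, (p : ℤ) ^ (f - 1 - s) * (t (s : ZMod f) - t' (s : ZMod f))))) ∧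
    (∀ (u : ZMod f → ℤ) (s : ZMod f),
      alphaQ p f u s + (u s : ℚ) = (p : ℚ) * alphaQ p f u (s - 1)) := by
  have hq := pfq_ne p hp hf
  have hiff : ∀ s : ZMod f, (∃ n : ℤ, alphaQ p f t s - alphaQ p f t' s = n) ↔
      ((p : ℤ) ^ f - 1) ∣ (Asum p f t s - Asum p f t' s) := by
    intro s
    have hd : alphaQ p f t s - alphaQ p f t' s
        = ((p : ℚ) ^ f - 1)⁻¹ * ((Asum p f t s - Asum p f t' s : ℤ) : ℚ) := by
      rw [alphaQ_eq, alphaQ_eq]; push_cast; ring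
    rw [hd]
    exact dvd_iff_exists p hp hf _
  have hsum : (∑ s ∈ Finset.range f, (p : ℤ) ^ (f - 1 - s) * (t (s : ZMod f) - t' (s : ZMod f)))
      = Asum p f t (-1) - Asum p f t' (-1) := by
    rw [Asum_neg_one p hf t, Asum_neg_one p hf t', ← Finset.sum_sub_distrib]
    exact Finset.sum_congr rfl fun i _ => by ring
  refine ⟨⟨?_, ?_⟩, ?_⟩
  · constructor
    · rintro ⟨s0, hs0⟩ s
      rw [hiff s]
      rw [hiff s0] at hs0
      exact dvd_all p hp hf t t' s0 hs0 s
    · intro h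
      exact ⟨0, h 0⟩
  · constructor
    · intro h
      rw [hsum]
      rw [← hiff (-1)]
      exact h (-1)
    · intro h s
      rw [hiff s]
      rw [hsum] at h
      exact dvd_all p hp hf t t' (-1) h s
  · intro u s
    have h := Asum_rec p hf u s
    have hQ : (Asum p f u s : ℚ) + ((p : ℚ) ^ f - 1) * (u s : ℚ)
        = (p : ℚ) * (Asum p f u (s - 1) : ℚ) := by exact_mod_cast h
    rw [alphaQ_eq, alphaQ_eq]
    field_simp
    linear_combination hQ
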